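/- Let L be a totally real number field and N a number field containing L with [N : L] = 4. Let d ∈ L and δ, β ∈ N with δ² = d, β² = −d, and N = L(δ, β). Set F = L(δ) and M = L(β), intermediate fields of N/L. Let n ≥ 3 be a rational integer, and let x be a unit of 𝒪_N such that N_{N/F}(x) = 1 and x ≡ 1 (mod n·𝒪_N), i.e., x − 1 ∈ n·𝒪_N. Then x lies in M = L(β). -/

import Mathlib

open NumberField Polynomial

section Aux

theorem ringHom_ext_top {L N A : Type*} [Field L] [Field N] [Ring A] [Algebra L N]
    {δ β : N} (h : Algebra.adjoin L ({δ, β} : Set N) = ⊤)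
    (f g : N →+* A) (h0 : ∀ a : L, f (algebraMap L N a) = g (algebraMap L N a))
    (h1 : f δ = g δ) (h2 : f β = g β) : ∀ z, f z = g z := by
  intro z
  have hz : z ∈ Algebra.adjoin L ({δ, β} : Set N) := h ▸ Algebra.mem_top
  induction hz using Algebra.adjoin_induction with
  | mem w hw => rcases hw with rfl | rfl <;> assumption
  | algebraMap a => exact h0 a
  | add a b _ _ ha hb => simp [map_add, ha, hb]
  | mul a b _ _ ha hb => simp [map_mul, ha, hb]

theorem quad_splits_aux {L N : Type*} [Field L] [Field N] [Algebra L N] (c : L) (r : N)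
    (hr : r ^ 2 = algebraMap L N c) : Splits ((X ^ 2 - C c).map (algebraMap L N)) := by
  have : (X ^ 2 - C c).map (algebraMap L N) = (X - C r) * (X - C (-r)) := by
    rw [Polynomial.map_sub, Polynomial.map_pow, map_X, map_C, ← hr, map_pow, map_neg]
    ring
  rw [this]
  exact (Splits.X_sub_C _).mul (Splits.X_sub_C _)

theorem galois_aux (L : Type*) [Field L] (N : Type*) [Field N] [Algebra L N] [CharZero L]
    (hfd : FiniteDimensional L N)
    (d : L) (δ β : N)
    (hδ : δ ^ 2 = algebraMap L N d) (hβ : β ^ 2 = - algebraMap L N d)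
    (halg : Algebra.adjoin L ({δ, β} : Set N) = ⊤) : IsGalois L N := by
  set p : L[X] := (X ^ 2 - C d) * (X ^ 2 - C (-d)) with hp
  have hmon : p.Monic :=
    ((monic_X_pow_sub_C d (by norm_num)).mul (monic_X_pow_sub_C (-d) (by norm_num)))
  have haevδ : aeval δ p = 0 := by simp [hp, hδ]
  have haevβ : aeval β p = 0 := by
    have h2 : aeval β (X ^ 2 - C (-d) : L[X]) = 0 := by simp [hβ]
    rw [hp, map_mul, h2, mul_zero]
  have hsplit : Splits (p.map (algebraMap L N)) := by
    rw [hp, Polynomial.map_mul]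
    exact (quad_splits_aux d δ hδ).mul (quad_splits_aux (-d) β (by rw [hβ, map_neg]))
  have hsf : IsSplittingField L N p := by
    constructor
    · exact hsplit
    · rw [eq_top_iff, ← halg]
      apply Algebra.adjoin_le
      rintro z (rfl | rfl)
      · exact Algebra.subset_adjoin (by rw [mem_rootSet]; exact ⟨hmon.ne_zero, haevδ⟩)
      · exact Algebra.subset_adjoin (by rw [mem_rootSet]; exact ⟨hmon.ne_zero, haevβ⟩)
  have : Normal L N := Normal.of_isSplittingField p
  exact IsGalois.mk

/-- In a Galois setting, a quadratic intermediate extension has a nontrivial automorphism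
negating the generator. -/
theorem exists_neg_aut {L N : Type*} [Field L] [Field N] [Algebra L N]
    [FiniteDimensional L N] [IsGalois L N]
    (a b : N) (halg : Algebra.adjoin L ({a, b} : Set N) = ⊤)
    (K : IntermediateField L N) (haK : a ∈ K) (hbb : b * b ∈ K)
    (hKN : Module.finrank K N = 2) :
    ∃ σ : N ≃ₐ[K] N, σ b = -b := by
  have hfix : ∀ z ∈ K, ∀ g : N ≃ₐ[K] N, g z = z := fun z hz g => g.commutes ⟨z, hz⟩
  have hcard : Fintype.card (N ≃ₐ[K] N) = 2 := by
    rw [← Nat.card_eq_fintype_card, IsGalois.card_aut_eq_finrank, hKN]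
  obtain ⟨σ, hσ1⟩ := Fintype.exists_ne_of_one_lt_card (by omega) (1 : N ≃ₐ[K] N)
  have hσb : σ b = b ∨ σ b = -b := by
    have h2 : σ b * σ b = b * b := by rw [← map_mul, hfix _ hbb σ]
    exact mul_self_eq_mul_self_iff.mp h2
  rcases hσb with h | h
  · exfalso
    apply hσ1
    apply AlgEquiv.ext
    exact ringHom_ext_top halg (σ : N →+* N) (RingHom.id N)
      (fun c => hfix _ (K.algebraMap_mem c) σ) (hfix _ haK σ) h
  · exact ⟨σ, h⟩

theorem two_mul_two_aux {a b : ℕ} (h : a * b = 4) (ha : a ≤ 2) (hb : b ≤ 2) :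
    a = 2 ∧ b = 2 := by
  interval_cases a <;> omega

theorem conj_of_sq_pos {z : ℂ} (him : (z ^ 2).im = 0) (hpos : 0 < (z ^ 2).re) :
    (starRingEnd ℂ) z = z := by
  have h1 : (z^2).im = 2 * z.re * z.im := by simp [sq, Complex.mul_im]; ring
  have h2 : (z^2).re = z.re^2 - z.im^2 := by simp [sq, Complex.mul_re]
  have him0 : z.im = 0 := by
    rcases mul_eq_zero.mp (by rw [h1] at him; linarith [him] : (2 * z.re) * z.im = 0) with h | h
    · exfalso; rw [h2] at hpos; nlinarith [sq_nonneg z.im, sq_nonneg z.re,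
        (by nlinarith : z.re = 0)]
    · exact h
  exact Complex.conj_eq_iff_im.mpr him0

theorem conj_of_sq_neg {z : ℂ} (him : (z ^ 2).im = 0) (hneg : (z ^ 2).re < 0) :
    (starRingEnd ℂ) z = -z := by
  have h1 : (z^2).im = 2 * z.re * z.im := by simp [sq, Complex.mul_im]; ring
  have h2 : (z^2).re = z.re^2 - z.im^2 := by simp [sq, Complex.mul_re]
  have hre0 : z.re = 0 := by
    have hmul : (2 * z.im) * z.re = 0 := by rw [h1] at him; linarith
    rcases mul_eq_zero.mp hmul with h | h
    · exfalso
      have : z.im = 0 := by linarith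
      rw [h2, this] at hneg; nlinarith [sq_nonneg z.re]
    · exact h
  apply Complex.ext <;> simp [hre0]

/-- An algebraic integer congruent to `1` mod `n ≥ 3` all of whose complex embeddings
have absolute value `1` must be `1`. -/
theorem unit_eq_one_aux {N : Type*} [Field N] [NumberField N] (n : ℤ) (hn : 3 ≤ n) (y : 𝓞 N)
    (hcong : y - 1 ∈ Ideal.span {(n : 𝓞 N)})
    (habs : ∀ φ : N →+* ℂ, ‖φ (algebraMap (𝓞 N) N y)‖ = 1) : y = 1 := by
  by_contra hy
  obtain ⟨w, hw⟩ := Ideal.mem_span_singleton'.mp hcong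
  set D := Module.finrank ℚ N with hD
  have hD0 : 0 < D := Module.finrank_pos
  set yy : N := algebraMap (𝓞 N) N (y - 1) with hyy
  have hyy0 : yy ≠ 0 := by
    rw [hyy, Ne, RingOfIntegers.coe_eq_zero_iff, sub_eq_zero]
    exact hy
  set m : ℤ := Algebra.norm ℤ (y - 1) with hm
  have hmq : (m : ℚ) = Algebra.norm ℚ yy := Algebra.coe_norm_int (y - 1)
  have hm0 : m ≠ 0 := by
    intro h
    rw [h] at hmq
    exact (Algebra.norm_ne_zero_iff.mpr hyy0) (by exact_mod_cast hmq.symm)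
  have hfac : m = Algebra.norm ℤ w * n ^ D := by
    rw [hm, ← hw, map_mul]
    congr 1
    have : (n : 𝓞 N) = algebraMap ℤ (𝓞 N) n := by simp
    rw [this, Algebra.norm_algebraMap_of_basis (RingOfIntegers.basis N)]
    rw [hD, ← RingOfIntegers.rank N, Module.finrank_eq_card_chooseBasisIndex]
  have hw0 : Algebra.norm ℤ w ≠ 0 := by
    intro h; rw [hfac, h, zero_mul] at hm0; exact hm0 rfl
  have hlow : (3:ℤ) ^ D ≤ |m| := by
    rw [hfac, abs_mul, abs_pow]
    calc (3:ℤ) ^ D = 1 * 3 ^ D := (one_mul _).symm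
      _ ≤ |Algebra.norm ℤ w| * |n| ^ D := by
          apply mul_le_mul
          · exact Int.one_le_abs hw0
          · exact pow_le_pow_left₀ (by norm_num) (by rw [abs_of_nonneg (by omega)]; exact hn) D
          · positivity
          · exact abs_nonneg _
  have hprod : algebraMap ℚ ℂ (Algebra.norm ℚ yy) = ∏ σ : N →ₐ[ℚ] ℂ, σ yy :=
    Algebra.norm_eq_prod_embeddings ℚ ℂ yy
  have hup : (|m| : ℝ) ≤ 2 ^ D := by
    have h1 : ‖algebraMap ℚ ℂ (Algebra.norm ℚ yy)‖ = (|m| : ℝ) := by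
      rw [← hmq, eq_ratCast (algebraMap ℚ ℂ) (m : ℚ)]
      push_cast
      simp
    have h2 : ‖∏ σ : N →ₐ[ℚ] ℂ, σ yy‖ ≤ 2 ^ D := by
      rw [norm_prod]
      have hcard : Fintype.card (N →ₐ[ℚ] ℂ) = D := AlgHom.card ℚ N ℂ
      calc ∏ σ : N →ₐ[ℚ] ℂ, ‖σ yy‖ ≤ ∏ _σ : N →ₐ[ℚ] ℂ, (2:ℝ) := by
            apply Finset.prod_le_prod
            · intro i _; positivity
            · intro σ _
              have : σ yy = σ.toRingHom (algebraMap (𝓞 N) N y) - 1 := by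
                rw [hyy, map_sub]; simp
              rw [this, sub_eq_add_neg]
              calc ‖_‖
                  ≤ ‖σ.toRingHom (algebraMap (𝓞 N) N y)‖ + ‖(-1 : ℂ)‖ :=
                    norm_add_le _ _
                _ = 2 := by rw [habs σ.toRingHom]; norm_num
        _ = 2 ^ D := by rw [Finset.prod_const, Finset.card_univ, hcard]
    rw [← h1, hprod]
    exact h2
  have hle : ((3:ℤ) ^ D : ℝ) ≤ 2 ^ D := by
    calc ((3:ℤ)^D : ℝ) ≤ (|m| : ℝ) := by exact_mod_cast hlow
      _ ≤ 2 ^ D := hup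
  have h32 : (2:ℝ) ^ D < 3 ^ D := by
    apply pow_lt_pow_left₀ (by norm_num) (by norm_num)
    omega
  push_cast at hle
  linarith

end Aux

set_option maxHeartbeats 1000000 in
/-- Lemma `min2`(3), reformulated.  With `L` totally real, `N/L` of degree
4 generated by `δ, β` with `δ² = d`, `β² = −d`, `F = L(δ)`, `M = L(β)`: if `n ≥ 3` and `x` is
a unit of `𝒪_N` with `N_{N/F}(x) = 1` and `x ≡ 1 (mod n𝒪_N)`, then `x ∈ M`. -/
theorem stmt_13 (L : Type*) [Field L] [NumberField L]
    (htr : ∀ (σ : L →+* ℂ) (y : L), (σ y).im = 0)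
    (N : Type*) [Field N] [NumberField N] [Algebra L N]
    (hdeg : Module.finrank L N = 4)
    (d : L) (δ β : N)
    (hδ : δ ^ 2 = algebraMap L N d) (hβ : β ^ 2 = - algebraMap L N d)
    (hgen : IntermediateField.adjoin L {δ, β} = (⊤ : IntermediateField L N))
    (F : IntermediateField L N) (hF : F = IntermediateField.adjoin L {δ})
    (M : IntermediateField L N) (hM : M = IntermediateField.adjoin L {β})
    (n : ℤ) (hn : 3 ≤ n)
    (x : (𝓞 N)ˣ)
    (hnorm : Algebra.norm F (algebraMap (𝓞 N) N (x : 𝓞 N)) = 1)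
    (hcong : ((x : 𝓞 N) - 1) ∈ Ideal.span {(n : 𝓞 N)}) :
    algebraMap (𝓞 N) N (x : 𝓞 N) ∈ M := by
  classical
  haveI hfd : FiniteDimensional L N := Module.finite_of_finrank_pos (by rw [hdeg]; norm_num)
  have halg : Algebra.adjoin L ({δ, β} : Set N) = ⊤ := by
    have h := IntermediateField.adjoin_toSubalgebra_of_isAlgebraic
      (F := L) (E := N) (S := {δ, β}) (fun z _ => Algebra.IsAlgebraic.isAlgebraic z)
    rw [hgen] at h
    rw [← h, IntermediateField.top_toSubalgebra]
  have halg' : Algebra.adjoin L ({β, δ} : Set N) = ⊤ := by rwa [Set.pair_comm]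
  haveI : IsGalois L N := galois_aux L N hfd d δ β hδ hβ halg
  have hδint : IsIntegral L δ := Algebra.IsIntegral.isIntegral δ
  have hβint : IsIntegral L β := Algebra.IsIntegral.isIntegral β
  -- degree computations
  have hLF : Module.finrank L F ≤ 2 := by
    rw [hF, IntermediateField.adjoin.finrank hδint]
    have hdvd : minpoly L δ ∣ X ^ 2 - C d := minpoly.dvd L δ (by simp [hδ])
    calc (minpoly L δ).natDegree ≤ (X ^ 2 - C d : L[X]).natDegree :=
          natDegree_le_of_dvd hdvd (monic_X_pow_sub_C d (by norm_num)).ne_zero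
      _ = 2 := by rw [natDegree_X_pow_sub_C]
  have hLM : Module.finrank L M ≤ 2 := by
    rw [hM, IntermediateField.adjoin.finrank hβint]
    have hdvd : minpoly L β ∣ X ^ 2 - C (-d) := minpoly.dvd L β (by simp [hβ])
    calc (minpoly L β).natDegree ≤ (X ^ 2 - C (-d) : L[X]).natDegree :=
          natDegree_le_of_dvd hdvd (monic_X_pow_sub_C (-d) (by norm_num)).ne_zero
      _ = 2 := by rw [natDegree_X_pow_sub_C]
  have hFβ : IntermediateField.adjoin F {β} = ⊤ := by
    apply IntermediateField.restrictScalars_injective L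
    rw [IntermediateField.restrictScalars_top, hF, IntermediateField.adjoin_adjoin_left,
      Set.singleton_union, hgen]
  have hMδ : IntermediateField.adjoin M {δ} = ⊤ := by
    apply IntermediateField.restrictScalars_injective L
    rw [IntermediateField.restrictScalars_top, hM, IntermediateField.adjoin_adjoin_left,
      Set.singleton_union, ← Set.pair_comm, hgen]
  have hFN : Module.finrank F N ≤ 2 := by
    have hβF : IsIntegral F β := hβint.tower_top
    have hmem : -(algebraMap L N d) ∈ F := neg_mem (F.algebraMap_mem d)
    have hdvd : minpoly F β ∣ X ^ 2 - C (⟨-(algebraMap L N d), hmem⟩ : F) :=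
      minpoly.dvd F β (by
        simp only [map_sub, map_pow, aeval_X, aeval_C]
        rw [hβ]
        simp only [IntermediateField.algebraMap_apply]
        ring)
    rw [← IntermediateField.finrank_top' (F := F) (E := N), ← hFβ,
      IntermediateField.adjoin.finrank hβF]
    calc (minpoly F β).natDegree ≤ _ :=
          natDegree_le_of_dvd hdvd (monic_X_pow_sub_C _ (by norm_num)).ne_zero
      _ = 2 := by rw [natDegree_X_pow_sub_C]
  have hMN : Module.finrank M N ≤ 2 := by
    have hδM : IsIntegral M δ := hδint.tower_top
    have hmem : algebraMap L N d ∈ M := M.algebraMap_mem d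
    have hdvd : minpoly M δ ∣ X ^ 2 - C (⟨algebraMap L N d, hmem⟩ : M) :=
      minpoly.dvd M δ (by
        simp only [map_sub, map_pow, aeval_X, aeval_C]
        rw [hδ]
        simp only [IntermediateField.algebraMap_apply]
        ring)
    rw [← IntermediateField.finrank_top' (F := M) (E := N), ← hMδ,
      IntermediateField.adjoin.finrank hδM]
    calc (minpoly M δ).natDegree ≤ _ :=
          natDegree_le_of_dvd hdvd (monic_X_pow_sub_C _ (by norm_num)).ne_zero
      _ = 2 := by rw [natDegree_X_pow_sub_C]
  have hmulF : Module.finrank L F * Module.finrank F N = 4 := by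
    rw [Module.finrank_mul_finrank, hdeg]
  have hmulM : Module.finrank L M * Module.finrank M N = 4 := by
    rw [Module.finrank_mul_finrank, hdeg]
  have hLF0 : 0 < Module.finrank L F := Module.finrank_pos
  have hFN0 : 0 < Module.finrank F N := Module.finrank_pos
  have hLM0 : 0 < Module.finrank L M := Module.finrank_pos
  have hMN0 : 0 < Module.finrank M N := Module.finrank_pos
  obtain ⟨hLF2, hFN2⟩ := two_mul_two_aux hmulF hLF hFN
  obtain ⟨hLM2, hMN2⟩ := two_mul_two_aux hmulM hLM hMN
  -- nonvanishing
  have hδ0 : δ ≠ 0 := by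
    rintro rfl
    rw [hF] at hLF2
    rw [show ({(0:N)} : Set N) = {0} from rfl] at hLF2
    rw [IntermediateField.adjoin_zero, IntermediateField.finrank_bot] at hLF2
    omega
  have hd0 : d ≠ 0 := by
    rintro rfl
    apply hδ0
    have : δ ^ 2 = 0 := by rw [hδ, map_zero]
    exact pow_eq_zero_iff (by norm_num) |>.mp this
  -- membership facts
  have hδF : δ ∈ F := hF ▸ IntermediateField.mem_adjoin_simple_self L δ
  have hβM : β ∈ M := hM ▸ IntermediateField.mem_adjoin_simple_self L β
  -- automorphisms σ (fixes F, negates β) and τ (fixes M, negates δ)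
  obtain ⟨σ, hσβ⟩ := exists_neg_aut δ β halg F hδF
    (by rw [← sq, hβ]; exact neg_mem (F.algebraMap_mem d)) hFN2
  obtain ⟨τ, hτδ⟩ := exists_neg_aut β δ halg' M hβM
    (by rw [← sq, hδ]; exact M.algebraMap_mem d) hMN2
  have hfixF : ∀ z ∈ F, σ z = z := fun z hz => σ.commutes ⟨z, hz⟩
  have hfixM : ∀ z ∈ M, τ z = z := fun z hz => τ.commutes ⟨z, hz⟩
  have hσδ : σ δ = δ := hfixF δ hδF
  have hτβ : τ β = β := hfixM β hβM
  have hσL : ∀ a : L, σ (algebraMap L N a) = algebraMap L N a :=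
    fun a => hfixF _ (F.algebraMap_mem a)
  have hτL : ∀ a : L, τ (algebraMap L N a) = algebraMap L N a :=
    fun a => hfixM _ (M.algebraMap_mem a)
  -- commutation and involution, pointwise
  have hcomm : ∀ z : N, σ (τ z) = τ (σ z) := by
    have := ringHom_ext_top halg ((σ : N →+* N).comp (τ : N →+* N))
      ((τ : N →+* N).comp (σ : N →+* N))
      (fun a => by simp [hσL, hτL])
      (by simp [hσδ, hτδ, map_neg])
      (by simp [hσβ, hτβ, map_neg])
    simpa using this
  have hτ017 : ∀ z : N, τ (τ z) = z := by
    have := ringHom_ext_top halg ((τ : N →+* N).comp (τ : N →+* N)) (RingHom.id N)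
      (fun a => by simp [hτL])
      (by simp [hτδ, map_neg])
      (by simp [hτβ])
    simpa using this
  -- x' and relative norm
  set x' : N := algebraMap (𝓞 N) N (x : 𝓞 N) with hx'
  have hx'0 : x' ≠ 0 := by
    rw [hx', Ne, RingOfIntegers.coe_eq_zero_iff]
    exact x.ne_zero
  have hσx : σ x' = x'⁻¹ := by
    have hcard : Fintype.card (N ≃ₐ[F] N) = 2 := by
      rw [← Nat.card_eq_fintype_card, IsGalois.card_aut_eq_finrank, hFN2]
    have hσ1 : (1 : N ≃ₐ[F] N) ≠ σ := by
      intro h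
      apply hδ0
      have : σ β = β := by rw [← h]; rfl
      rw [hσβ] at this
      have hβ0 : β = 0 := by linear_combination (-1/2 : N) * this
      rw [hβ0] at hβ
      have : algebraMap L N d = 0 := by
        rw [← neg_eq_zero, ← hβ]; ring
      have : δ ^ 2 = 0 := by rw [hδ, this]
      exact pow_eq_zero_iff (by norm_num) |>.mp this
    have huniv : (Finset.univ : Finset (N ≃ₐ[F] N)) = {1, σ} := by
      symm
      apply Finset.eq_of_subset_of_card_le (Finset.subset_univ _)
      rw [Finset.card_univ, hcard, Finset.card_pair hσ1]
    have hps := Algebra.norm_eq_prod_automorphisms (K := F) x'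
    rw [hnorm, map_one, huniv, Finset.prod_pair hσ1] at hps
    have hmul : x' * σ x' = 1 := by
      have : (1 : N ≃ₐ[F] N) x' = x' := rfl
      rw [this] at hps
      exact hps.symm
    field_simp
    linear_combination hmul
  -- integral structure: τ restricted to 𝓞 N
  let τQ : N ≃ₐ[ℚ] N := (τ.restrictScalars L).restrictScalars ℚ
  let τO : (𝓞 N) ≃ₐ[ℤ] (𝓞 N) := galRestrict ℤ ℚ N (𝓞 N) τQ
  have hkey : ∀ z : 𝓞 N, algebraMap (𝓞 N) N (τO z) = τ (algebraMap (𝓞 N) N z) :=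
    fun z => algebraMap_galRestrict_apply ℤ τQ z
  let u : (𝓞 N)ˣ := Units.map (τO : 𝓞 N →* 𝓞 N) x
  have hu : (u : 𝓞 N) = τO (x : 𝓞 N) := rfl
  set y : (𝓞 N)ˣ := x * u⁻¹ with hy
  -- y ≡ 1 mod n
  have hucong : ((u : 𝓞 N) - 1) ∈ Ideal.span {(n : 𝓞 N)} := by
    obtain ⟨w, hw⟩ := Ideal.mem_span_singleton'.mp hcong
    apply Ideal.mem_span_singleton'.mpr
    refine ⟨τO w, ?_⟩
    have h1 : τO ((x : 𝓞 N) - 1) = τO (x : 𝓞 N) - 1 := by simp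
    rw [hu, ← h1, ← hw]
    simp [mul_comm]
  have hycong : ((y : 𝓞 N) - 1) ∈ Ideal.span {(n : 𝓞 N)} := by
    have hcoe : (y : 𝓞 N) = (x : 𝓞 N) * ((u⁻¹ : (𝓞 N)ˣ) : 𝓞 N) := rfl
    have huu : (u : 𝓞 N) * ((u⁻¹ : (𝓞 N)ˣ) : 𝓞 N) = 1 := by
      rw [← Units.val_mul, mul_inv_cancel, Units.val_one]
    have : (y : 𝓞 N) - 1 = (((x : 𝓞 N) - 1) - ((u : 𝓞 N) - 1)) * ((u⁻¹ : (𝓞 N)ˣ) : 𝓞 N) := by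
      rw [hcoe]
      linear_combination huu
    rw [this]
    exact Ideal.mul_mem_right _ _ (Ideal.sub_mem _ hcong hucong)
  -- y' in N
  set y' : N := algebraMap (𝓞 N) N (y : 𝓞 N) with hy'
  have hτx0 : τ x' ≠ 0 := by
    intro h
    exact hx'0 (τ.injective (h.trans (map_zero τ).symm))
  have hy'eq : y' = x' * (τ x')⁻¹ := by
    have hcoe : (y : 𝓞 N) = (x : 𝓞 N) * ((u⁻¹ : (𝓞 N)ˣ) : 𝓞 N) := rfl
    have huu : (u : 𝓞 N) * ((u⁻¹ : (𝓞 N)ˣ) : 𝓞 N) = 1 := by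
      rw [← Units.val_mul, mul_inv_cancel, Units.val_one]
    have h2 : τ x' * algebraMap (𝓞 N) N ((u⁻¹ : (𝓞 N)ˣ) : 𝓞 N) = 1 := by
      rw [← hkey, ← hu, ← map_mul, huu, map_one]
    have h3 : algebraMap (𝓞 N) N ((u⁻¹ : (𝓞 N)ˣ) : 𝓞 N) = (τ x')⁻¹ :=
      eq_inv_of_mul_eq_one_right (by rw [mul_comm] at h2 ⊢; exact h2)
    rw [hy', hcoe, map_mul, h3, hx']
  have hy'0 : y' ≠ 0 := by
    rw [hy'eq]
    exact mul_ne_zero hx'0 (inv_ne_zero hτx0)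
  -- σ and τ invert y'
  have hσy : σ y' = y'⁻¹ := by
    rw [hy'eq, map_mul, hσx, map_inv₀, hcomm, hσx, map_inv₀]
    field_simp
  have hτy : τ y' = y'⁻¹ := by
    rw [hy'eq, map_mul, map_inv₀, hτ017]
    field_simp
  -- all complex embeddings of y' have absolute value 1
  have habs : ∀ φ : N →+* ℂ, ‖φ y'‖ = 1 := by
    intro φ
    have hφL : ∀ a : L, (starRingEnd ℂ) (φ (algebraMap L N a)) = φ (algebraMap L N a) :=
      fun a => Complex.conj_eq_iff_im.mpr (htr (φ.comp (algebraMap L N)) a)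
    have hδsq : (φ δ) ^ 2 = φ (algebraMap L N d) := by rw [← map_pow, hδ]
    have hβsq : (φ β) ^ 2 = -(φ (algebraMap L N d)) := by rw [← map_pow, hβ, map_neg]
    have himd : (φ (algebraMap L N d)).im = 0 := htr (φ.comp (algebraMap L N)) d
    have hd0' : φ (algebraMap L N d) ≠ 0 := fun h =>
      hd0 ((_root_.map_eq_zero (algebraMap L N)).mp (φ.injective (by rw [h, map_zero])))
    have hconj : (starRingEnd ℂ) (φ y') = (φ y')⁻¹ := by
      rcases lt_trichotomy (φ (algebraMap L N d)).re 0 with hlt | heq | hgt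
      · -- conj ∘ φ = φ ∘ τ
        have h1 : (starRingEnd ℂ) (φ δ) = -(φ δ) :=
          conj_of_sq_neg (by rw [hδsq]; exact himd) (by rw [hδsq]; exact hlt)
        have h2 : (starRingEnd ℂ) (φ β) = φ β :=
          conj_of_sq_pos (by rw [hβsq]; simp [himd]) (by rw [hβsq]; simp; linarith)
        have hext := ringHom_ext_top halg (((starRingEnd ℂ) : ℂ →+* ℂ).comp φ)
          (φ.comp (τ : N →+* N))
          (fun a => by simp [hφL, hτL])
          (by simpa [hτδ, map_neg] using h1)
          (by simpa [hτβ] using h2)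
        have := hext y'
        simp only [RingHom.coe_comp, Function.comp_apply] at this
        rw [this]
        show φ (τ y') = (φ y')⁻¹
        rw [hτy, map_inv₀]
      · -- impossible
        exfalso
        apply hd0'
        exact Complex.ext heq himd
      · -- conj ∘ φ = φ ∘ σ
        have h1 : (starRingEnd ℂ) (φ δ) = φ δ :=
          conj_of_sq_pos (by rw [hδsq]; exact himd) (by rw [hδsq]; exact hgt)
        have h2 : (starRingEnd ℂ) (φ β) = -(φ β) :=
          conj_of_sq_neg (by rw [hβsq]; simp [himd]) (by rw [hβsq]; simp; linarith)
        have hext := ringHom_ext_top halg (((starRingEnd ℂ) : ℂ →+* ℂ).comp φ)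
          (φ.comp (σ : N →+* N))
          (fun a => by simp [hφL, hσL])
          (by simpa [hσδ] using h1)
          (by simpa [hσβ, map_neg] using h2)
        have := hext y'
        simp only [RingHom.coe_comp, Function.comp_apply] at this
        rw [this]
        show φ (σ y') = (φ y')⁻¹
        rw [hσy, map_inv₀]
    have hφy0 : φ y' ≠ 0 := fun h => hy'0 (φ.injective (by rw [h, map_zero]))
    have hns : (Complex.normSq (φ y') : ℂ) = 1 := by
      rw [← Complex.mul_conj, hconj, mul_inv_cancel₀ hφy0]
    have hns' : Complex.normSq (φ y') = 1 := by exact_mod_cast hns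
    have hsq : ‖φ y'‖ ^ 2 = 1 := by rw [Complex.sq_norm, hns']
    have hnn : 0 ≤ ‖φ y'‖ := norm_nonneg _
    have h1 : (‖φ y'‖ - 1) * (‖φ y'‖ + 1) = 0 := by
      linear_combination hsq
    rcases mul_eq_zero.mp h1 with h | h
    · linarith
    · linarith
  -- conclude y = 1
  have hyone : (y : 𝓞 N) = 1 := unit_eq_one_aux n hn (y : 𝓞 N) hycong (by
    intro φ
    exact habs φ)
  have hxu : (x : 𝓞 N) = τO (x : 𝓞 N) := by
    have h1 : (x : 𝓞 N) * ((u⁻¹ : (𝓞 N)ˣ) : 𝓞 N) = 1 := hyone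
    have h2 : x * u⁻¹ = 1 := Units.ext h1
    have h3 : x = u := by
      have := mul_eq_one_iff_eq_inv.mp h2
      rwa [inv_inv] at this
    rw [← hu, ← h3]
  have hτx : τ x' = x' := by
    rw [hx', ← hkey, ← hxu]
  -- every M-automorphism fixes x'
  have hfixall : ∀ g : N ≃ₐ[M] N, g x' = x' := by
    intro g
    have hgβ : g β = β := g.commutes ⟨β, hβM⟩
    have hgL : ∀ a : L, g (algebraMap L N a) = algebraMap L N a :=
      fun a => g.commutes ⟨algebraMap L N a, M.algebraMap_mem a⟩
    have hgδ : g δ = δ ∨ g δ = -δ := by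
      have h2 : g δ * g δ = δ * δ := by
        rw [← map_mul]
        have : δ * δ = algebraMap L N d := by rw [← sq, hδ]
        rw [this, hgL]
      exact mul_self_eq_mul_self_iff.mp h2
    rcases hgδ with h | h
    · have := ringHom_ext_top halg (g : N →+* N) (RingHom.id N)
        (fun a => by simp [hgL a]) (by simp [h]) (by simp [hgβ])
      simpa using this x'
    · have := ringHom_ext_top halg (g : N →+* N) (τ : N →+* N)
        (fun a => by simp [hgL a, hτL a]) (by simp [h, hτδ]) (by simp [hgβ, hτβ])
      have h2 : g x' = τ x' := this x'
      rw [h2, hτx]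
  -- conclude membership in M
  have hbot : x' ∈ (⊥ : IntermediateField M N) := by
    have hff : IntermediateField.fixedField
        (IntermediateField.fixingSubgroup (⊥ : IntermediateField M N)) =
        (⊥ : IntermediateField M N) := IsGalois.fixedField_fixingSubgroup ⊥
    rw [← hff]
    intro g
    exact hfixall g
  obtain ⟨c, hc⟩ := IntermediateField.mem_bot.mp hbot
  show x' ∈ M
  rw [← hc]
  exact c.2
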